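/- Let S = {P̄₁, …, P̄_m} be a finite nonempty collection of N×N column stochastic matrices such that every finite product (word) of matrices from S, with repetitions allowed, is SIA. Then for every ε > 0 there exists an integer ν(ε) such that every word B formed as a product of at least ν(ε) matrices from S satisfies δ(B) < ε, where δ(B) = max_j max_{i₁, i₂} |B(j, i₁) − B(j, i₂)|. -/

import Mathlib

open Matrix Filter

/-- An `N × N` real matrix is column stochastic if all entries are nonnegative and
each column sums to `1`. -/
def ColStoch {N : Type*} [Fintype N] (A : Matrix N N ℝ) : Prop :=
  (∀ j i, 0 ≤ A j i) ∧ ∀ i, ∑ j, A j i = 1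

/-- A column stochastic matrix `B` is SIA if its powers `B^m` converge (entrywise)
to a matrix of the form `c ⬝ 𝟙ᵀ` for some nonnegative vector `c`. -/
def IsSIA {N : Type*} [Fintype N] [DecidableEq N] (B : Matrix N N ℝ) : Prop :=
  ColStoch B ∧ ∃ c : N → ℝ, (∀ j, 0 ≤ c j) ∧
    Tendsto (fun m => B ^ m) atTop (nhds (Matrix.of fun j _ => c j))

section Aux
variable {N : ℕ}

local notation "M" => Matrix (Fin N) (Fin N) ℝ

lemma cs_one : ColStoch (1 : M) := by
  constructor
  · intro j i
    by_cases h : j = i <;> simp [Matrix.one_apply, h]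
  · intro i
    simp [Matrix.one_apply]

lemma cs_mul {A B : M} (hA : ColStoch A) (hB : ColStoch B) : ColStoch (A * B) := by
  constructor
  · intro j i
    rw [Matrix.mul_apply]
    exact Finset.sum_nonneg fun k _ => mul_nonneg (hA.1 j k) (hB.1 k i)
  · intro i
    simp only [Matrix.mul_apply]
    rw [Finset.sum_comm]
    calc ∑ k, ∑ j, A j k * B k i = ∑ k, (∑ j, A j k) * B k i := by
          simp [Finset.sum_mul]
      _ = ∑ k, B k i := by simp [hA.2]
      _ = 1 := hB.2 i

lemma cs_list {L : List M} (h : ∀ A ∈ L, ColStoch A) : ColStoch L.prod := by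
  induction L with
  | nil => exact cs_one
  | cons A L ih =>
    rw [List.prod_cons]
    exact cs_mul (h A (by simp)) (ih fun B hB => h B (by simp [hB]))

lemma cs_entry_le_one {A : M} (hA : ColStoch A) (j i : Fin N) : A j i ≤ 1 := by
  calc A j i ≤ ∑ k, A k i :=
        Finset.single_le_sum (fun k _ => hA.1 k i) (Finset.mem_univ j)
    _ = 1 := hA.2 i

lemma mul_entry_pos_iff {A B : M} (hA : ∀ j i, 0 ≤ A j i) (hB : ∀ j i, 0 ≤ B j i)
    (j i : Fin N) : 0 < (A * B) j i ↔ ∃ k, 0 < A j k ∧ 0 < B k i := by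
  rw [Matrix.mul_apply]
  constructor
  · intro h
    by_contra hc
    push_neg at hc
    have : ∑ k, A j k * B k i ≤ 0 := by
      apply Finset.sum_nonpos
      intro k _
      rcases lt_or_ge 0 (A j k) with h1 | h1
      · exact mul_nonpos_of_nonneg_of_nonpos (hA j k) (hc k h1)
      · have h2 : A j k = 0 := le_antisymm h1 (hA j k)
        rw [h2, zero_mul]
    linarith
  · rintro ⟨k, hk1, hk2⟩
    apply Finset.sum_pos'
    · exact fun l _ => mul_nonneg (hA j l) (hB l i)
    · exact ⟨k, Finset.mem_univ k, mul_pos hk1 hk2⟩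

/-- The zero/positivity pattern of a matrix. -/
noncomputable def pat (A : M) : Matrix (Fin N) (Fin N) Bool := fun j i => decide (0 < A j i)

lemma pat_pos_iff {A : M} {j i : Fin N} : pat A j i = true ↔ 0 < A j i := by
  simp [pat]

lemma pat_mul_congr {A X Y : M} (hA : ∀ j i, 0 ≤ A j i) (hX : ∀ j i, 0 ≤ X j i)
    (hY : ∀ j i, 0 ≤ Y j i) (h : pat X = pat Y) : pat (A * X) = pat (A * Y) := by
  funext j i
  simp only [pat, decide_eq_decide]
  rw [mul_entry_pos_iff hA hX, mul_entry_pos_iff hA hY]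
  constructor <;> rintro ⟨k, h1, h2⟩ <;> refine ⟨k, h1, ?_⟩
  · rw [← pat_pos_iff, ← h, pat_pos_iff]; exact h2
  · rw [← pat_pos_iff, h, pat_pos_iff]; exact h2

/-- `A` has a strictly positive row. -/
def PosRow (A : M) : Prop := ∃ j, ∀ i, 0 < A j i

lemma posRow_of_pat {A B : M} (h : pat A = pat B) (hA : PosRow A) : PosRow B := by
  obtain ⟨j, hj⟩ := hA
  exact ⟨j, fun i => pat_pos_iff.1 (by rw [← h]; exact pat_pos_iff.2 (hj i))⟩

lemma posRow_mul_left {A B : M} (hA : ColStoch A) (hB : ∀ j i, 0 ≤ B j i)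
    (h : PosRow B) : PosRow (A * B) := by
  obtain ⟨j₀, hj₀⟩ := h
  have hcol : ∃ j, 0 < A j j₀ := by
    by_contra hc
    push_neg at hc
    have : ∑ j, A j j₀ ≤ 0 := Finset.sum_nonpos fun j _ => hc j
    rw [hA.2 j₀] at this; linarith
  obtain ⟨j, hj⟩ := hcol
  exact ⟨j, fun i => (mul_entry_pos_iff hA.1 hB j i).2 ⟨j₀, hj, hj₀ i⟩⟩

lemma posRow_mul_right {A B : M} (hA : ∀ j i, 0 ≤ A j i) (hB : ColStoch B)
    (h : PosRow A) : PosRow (A * B) := by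
  obtain ⟨j₀, hj₀⟩ := h
  refine ⟨j₀, fun i => ?_⟩
  have hcol : ∃ k, 0 < B k i := by
    by_contra hc
    push_neg at hc
    have : ∑ k, B k i ≤ 0 := Finset.sum_nonpos fun k _ => hc k
    rw [hB.2 i] at this; linarith
  obtain ⟨k, hk⟩ := hcol
  exact (mul_entry_pos_iff hA hB.1 j₀ i).2 ⟨k, hj₀ k, hk⟩

/-- The ℓ¹ contraction lemma. -/
lemma contract {A : M} (hA : ColStoch A) {γ : ℝ} (hγ1 : γ ≤ 1) {j₀ : Fin N}
    (hrow : ∀ i, γ ≤ A j₀ i) (v : Fin N → ℝ) (hv : ∑ i, v i = 0) :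
    ∑ j, |∑ i, A j i * v i| ≤ (1 - γ) * ∑ i, |v i| := by
  set d : Fin N → ℝ := fun j => if j = j₀ then γ else 0 with hd
  have key : ∀ j, ∑ i, A j i * v i = ∑ i, (A j i - d j) * v i := by
    intro j
    simp only [sub_mul, Finset.sum_sub_distrib, ← Finset.mul_sum, hv, mul_zero, sub_zero]
  have hnn : ∀ j i, 0 ≤ A j i - d j := by
    intro j i
    by_cases h : j = j₀
    · simp only [hd, h, if_pos rfl]
      have := hrow i
      linarith
    · simp only [hd, if_neg h, sub_zero]
      exact hA.1 j i
  calc ∑ j, |∑ i, A j i * v i| = ∑ j, |∑ i, (A j i - d j) * v i| := by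
        simp only [key]
    _ ≤ ∑ j, ∑ i, |(A j i - d j) * v i| :=
        Finset.sum_le_sum fun j _ => Finset.abs_sum_le_sum_abs _ _
    _ = ∑ j, ∑ i, (A j i - d j) * |v i| := by
        congr 1; funext j; congr 1; funext i
        rw [abs_mul, abs_of_nonneg (hnn j i)]
    _ = ∑ i, (∑ j, (A j i - d j)) * |v i| := by
        rw [Finset.sum_comm]
        congr 1; funext i
        rw [Finset.sum_mul]
    _ = ∑ i, (1 - γ) * |v i| := by
        congr 1; funext i
        congr 1
        rw [Finset.sum_sub_distrib, hA.2 i]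
        congr 1
        simp [hd]
    _ = (1 - γ) * ∑ i, |v i| := by rw [Finset.mul_sum]

lemma cs_pow {A : M} (hA : ColStoch A) : ∀ m, ColStoch (A ^ m)
  | 0 => by rw [pow_zero]; exact cs_one
  | m + 1 => by rw [pow_succ]; exact cs_mul (cs_pow hA m) hA

lemma sia_pow_posRow (hN : 0 < N) {B : M}
    (hpowcs : ∀ m, ColStoch (B ^ m))
    {c : Fin N → ℝ}
    (htend : Tendsto (fun m => B ^ m) atTop (nhds (Matrix.of fun j _ => c j))) :
    ∃ m, PosRow (B ^ m) := by
  have hentry : ∀ j i, Tendsto (fun m => (B ^ m) j i) atTop (nhds (c j)) := by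
    intro j i
    have h1 := (tendsto_pi_nhds.1 htend) j
    exact (tendsto_pi_nhds.1 h1) i
  have i₀ : Fin N := ⟨0, hN⟩
  have hsum : ∑ j, c j = 1 := by
    have h1 : Tendsto (fun m => ∑ j, (B ^ m) j i₀) atTop (nhds (∑ j, c j)) :=
      tendsto_finset_sum _ fun j _ => hentry j i₀
    have h2 : (fun m => ∑ j, (B ^ m) j i₀) = fun _ => (1 : ℝ) := by
      funext m
      exact (hpowcs m).2 i₀
    rw [h2] at h1
    exact (tendsto_const_nhds_iff.1 h1).symm
  have hex : ∃ j, 0 < c j := by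
    by_contra hc
    push_neg at hc
    have : ∑ j, c j ≤ 0 := Finset.sum_nonpos fun j _ => hc j
    rw [hsum] at this; linarith
  obtain ⟨j₀, hj₀⟩ := hex
  have hev : ∀ᶠ m in atTop, ∀ i, 0 < (B ^ m) j₀ i := by
    rw [Filter.eventually_all]
    intro i
    exact (hentry j₀ i).eventually (eventually_gt_nhds hj₀)
  obtain ⟨m, hm⟩ := hev.exists
  exact ⟨m, j₀, hm⟩

/-- Every word over `S` of length `card patterns + 1` has a positive row. -/
lemma word_posRow (hN : 0 < N) (S : Finset M) (hcs : ∀ A ∈ S, ColStoch A)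
    (hpos : ∀ L : List M, (∀ A ∈ L, A ∈ S) → L ≠ [] → ∃ m, PosRow (L.prod ^ m)) :
    ∀ L : List M, (∀ A ∈ L, A ∈ S) →
      L.length = Fintype.card (Matrix (Fin N) (Fin N) Bool) + 1 → PosRow L.prod := by
  set n₀ := Fintype.card (Matrix (Fin N) (Fin N) Bool) + 1 with hn₀
  intro L hL hlen
  have hcsL : ∀ K : List M, (∀ A ∈ K, A ∈ S) → ColStoch K.prod :=
    fun K hK => cs_list fun A hA => hcs A (hK A hA)
  have main : ∀ a b : ℕ, a < b → b < n₀ →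
      pat ((L.drop a).prod) = pat ((L.drop b).prod) → PosRow L.prod := by
    intro a b hab hbn heq
    set Q : List M := (L.drop a).take (b - a) with hQ
    have hsplit : L.drop a = Q ++ L.drop b := by
      rw [hQ]
      conv_lhs => rw [← List.take_append_drop (b - a) (L.drop a)]
      rw [List.drop_drop]
      have h' : a + (b - a) = b := by omega
      rw [h']
    have hQmem : ∀ A ∈ Q, A ∈ S := fun A hA =>
      hL A (List.mem_of_mem_drop (List.mem_of_mem_take hA))
    have hPmem : ∀ A ∈ L.drop b, A ∈ S := fun A hA => hL A (List.mem_of_mem_drop hA)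
    have hbL : b < L.length := by rw [hlen]; exact hbn
    have hQne : Q ≠ [] := by
      rw [hQ, ← List.length_pos_iff, List.length_take, List.length_drop]
      omega
    set Qp : M := Q.prod with hQp
    set P : M := (L.drop b).prod with hP
    have hQcs : ColStoch Qp := hcsL Q hQmem
    have hPcs : ColStoch P := hcsL _ hPmem
    have hkey : pat (Qp * P) = pat P := by
      rw [← List.prod_append, ← hsplit]
      exact heq
    have hiter : ∀ m, pat (Qp ^ m * P) = pat P := by
      intro m
      induction m with
      | zero => rw [pow_zero, one_mul]
      | succ m ih =>
        rw [pow_succ', mul_assoc]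
        calc pat (Qp * (Qp ^ m * P)) = pat (Qp * P) :=
              pat_mul_congr hQcs.1 (cs_mul (cs_pow hQcs m) hPcs).1 hPcs.1 ih
          _ = pat P := hkey
    obtain ⟨m, hm⟩ := hpos Q hQmem hQne
    rw [← hQp] at hm
    have h1 : PosRow (Qp ^ m * P) := posRow_mul_right (cs_pow hQcs m).1 hPcs hm
    have h2 : PosRow P := posRow_of_pat (hiter m) h1
    have h3 : L.prod = (L.take b).prod * P := by
      rw [hP, ← List.prod_append, List.take_append_drop]
    rw [h3]
    exact posRow_mul_left (hcsL _ fun A hA => hL A (List.mem_of_mem_take hA)) hPcs.1 h2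
  have hcard : Fintype.card (Matrix (Fin N) (Fin N) Bool) < Fintype.card (Fin n₀) := by
    simp [hn₀]
  obtain ⟨t₁, t₂, hne, heq⟩ := Fintype.exists_ne_map_eq_of_card_lt
    (fun t : Fin n₀ => pat ((L.drop (t : ℕ)).prod)) hcard
  rcases Ne.lt_or_gt hne with h | h
  · exact main t₁ t₂ h t₂.2 heq
  · exact main t₂ t₁ h t₁.2 heq.symm

/-- Extraction of a uniform positivity level `γ` for all words of length `n₀`. -/
lemma exists_gamma (hN : 0 < N) (S : Finset M) (hne : S.Nonempty)
    (hcs : ∀ A ∈ S, ColStoch A) (n₀ : ℕ) (hn₀ : 0 < n₀)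
    (hword : ∀ L : List M, (∀ A ∈ L, A ∈ S) → L.length = n₀ → PosRow L.prod) :
    ∃ γ : ℝ, 0 < γ ∧ γ ≤ 1 ∧ ∀ L : List M, (∀ A ∈ L, A ∈ S) → L.length = n₀ →
      ∃ j₀, ∀ i, γ ≤ L.prod j₀ i := by
  haveI : Nonempty (Fin N) := ⟨⟨0, hN⟩⟩
  haveI hTne : Nonempty (Fin n₀ → {A : M // A ∈ S}) :=
    ⟨fun _ => ⟨hne.choose, hne.choose_spec⟩⟩
  have huN : (Finset.univ : Finset (Fin N)).Nonempty := Finset.univ_nonempty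
  have huT : (Finset.univ : Finset (Fin n₀ → {A : M // A ∈ S})).Nonempty :=
    Finset.univ_nonempty
  set ρ : M → ℝ := fun W => Finset.univ.sup' huN fun j => Finset.univ.inf' huN fun i => W j i
    with hρ
  set wd : (Fin n₀ → {A : M // A ∈ S}) → List M := fun f => List.ofFn fun t => (f t).1
    with hwd
  have hwdmem : ∀ f, ∀ A ∈ wd f, A ∈ S := by
    intro f A hA
    rw [hwd, List.mem_ofFn] at hA
    obtain ⟨t, ht⟩ := hA
    rw [← ht]
    exact (f t).2
  have hwdlen : ∀ f, (wd f).length = n₀ := fun f => List.length_ofFn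
  set γ : ℝ := Finset.univ.inf' huT fun f => ρ (wd f).prod with hγ
  have hρpos : ∀ f, 0 < ρ (wd f).prod := by
    intro f
    obtain ⟨j₀, hj₀⟩ := hword (wd f) (hwdmem f) (hwdlen f)
    have h1 : (0:ℝ) < Finset.univ.inf' huN fun i => (wd f).prod j₀ i := by
      rw [Finset.lt_inf'_iff]
      exact fun i _ => hj₀ i
    exact lt_of_lt_of_le h1
      (Finset.le_sup' (fun j => Finset.univ.inf' huN fun i => (wd f).prod j i)
        (Finset.mem_univ j₀))
  have hγpos : 0 < γ := by
    rw [hγ, Finset.lt_inf'_iff]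
    exact fun f _ => hρpos f
  have hγ1 : γ ≤ 1 := by
    obtain ⟨f₀⟩ := hTne
    have h1 : γ ≤ ρ (wd f₀).prod := Finset.inf'_le _ (Finset.mem_univ f₀)
    have h2 : ρ (wd f₀).prod ≤ 1 := by
      rw [hρ]
      apply Finset.sup'_le
      intro j _
      refine le_trans (Finset.inf'_le _ (Finset.mem_univ j)) ?_
      exact cs_entry_le_one (cs_list fun A hA => hcs A (hwdmem f₀ A hA)) j j
    linarith
  refine ⟨γ, hγpos, hγ1, ?_⟩
  intro L hL hlen
  set f : Fin n₀ → {A : M // A ∈ S} := fun t =>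
    ⟨L.get (Fin.cast hlen.symm t), hL _ (List.get_mem _ _)⟩ with hf
  have hLf : wd f = L := by
    rw [hwd]
    apply List.ext_get
    · simp [hlen]
    · intro n h1 h2
      rw [List.get_ofFn]
      rfl
  have h1 : γ ≤ ρ L.prod := by
    rw [← hLf]
    exact Finset.inf'_le _ (Finset.mem_univ f)
  rw [hρ, Finset.le_sup'_iff] at h1
  obtain ⟨j₀, _, hj₀⟩ := h1
  exact ⟨j₀, fun i => le_trans hj₀ (Finset.inf'_le _ (Finset.mem_univ i))⟩

/-- The main contraction estimate by induction on the number of blocks. -/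
lemma key_bound (S : Finset M) (hcs : ∀ A ∈ S, ColStoch A) {n₀ : ℕ} {γ : ℝ}
    (hγ1 : γ ≤ 1)
    (hblock : ∀ L : List M, (∀ A ∈ L, A ∈ S) → L.length = n₀ →
      ∃ j₀, ∀ i, γ ≤ L.prod j₀ i) :
    ∀ (k : ℕ) (L : List M), (∀ A ∈ L, A ∈ S) → n₀ * k ≤ L.length →
      ∀ i₁ i₂, ∑ j, |L.prod j i₁ - L.prod j i₂| ≤ 2 * (1 - γ) ^ k := by
  intro k
  induction k with
  | zero =>
    intro L hL _ i₁ i₂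
    have hP : ColStoch L.prod := cs_list fun A hA => hcs A (hL A hA)
    rw [pow_zero, mul_one]
    calc ∑ j, |L.prod j i₁ - L.prod j i₂| ≤ ∑ j, (L.prod j i₁ + L.prod j i₂) := by
          apply Finset.sum_le_sum
          intro j _
          have h1 := hP.1 j i₁
          have h2 := hP.1 j i₂
          rw [abs_sub_le_iff]
          constructor <;> linarith
      _ = 2 := by rw [Finset.sum_add_distrib, hP.2, hP.2]; norm_num
  | succ k ih =>
    intro L hL hlen i₁ i₂
    have hn₀L : n₀ ≤ L.length := by
      have : n₀ * (k + 1) = n₀ * k + n₀ := by ring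
      omega
    have htlen : (L.take n₀).length = n₀ := by
      rw [List.length_take]
      omega
    have htm : ∀ A ∈ L.take n₀, A ∈ S := fun A hA => hL A (List.mem_of_mem_take hA)
    have hdm : ∀ A ∈ L.drop n₀, A ∈ S := fun A hA => hL A (List.mem_of_mem_drop hA)
    set B : M := (L.take n₀).prod with hB
    set D : M := (L.drop n₀).prod with hD
    have hBcs : ColStoch B := cs_list fun A hA => hcs A (htm A hA)
    have hDcs : ColStoch D := cs_list fun A hA => hcs A (hdm A hA)
    obtain ⟨j₀, hj₀⟩ := hblock (L.take n₀) htm htlen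
    rw [← hB] at hj₀
    set v : Fin N → ℝ := fun x => D x i₁ - D x i₂ with hv
    have hvsum : ∑ i, v i = 0 := by
      rw [hv]
      simp only [Finset.sum_sub_distrib, hDcs.2, sub_self]
    have hsplit : ∀ j i, L.prod j i = ∑ x, B j x * D x i := by
      intro j i
      conv_lhs => rw [← List.take_append_drop n₀ L]
      rw [List.prod_append, ← hB, ← hD, Matrix.mul_apply]
    have hrw : ∀ j, L.prod j i₁ - L.prod j i₂ = ∑ x, B j x * v x := by
      intro j
      rw [hsplit j i₁, hsplit j i₂, ← Finset.sum_sub_distrib]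
      congr 1; funext x
      rw [hv]; ring
    have hIH : ∑ x, |v x| ≤ 2 * (1 - γ) ^ k := by
      have hdlen : n₀ * k ≤ (L.drop n₀).length := by
        rw [List.length_drop]
        have : n₀ * (k + 1) = n₀ * k + n₀ := by ring
        omega
      exact ih (L.drop n₀) hdm hdlen i₁ i₂
    calc ∑ j, |L.prod j i₁ - L.prod j i₂| = ∑ j, |∑ x, B j x * v x| := by
          simp only [hrw]
      _ ≤ (1 - γ) * ∑ x, |v x| := contract hBcs hγ1 hj₀ v hvsum
      _ ≤ (1 - γ) * (2 * (1 - γ) ^ k) :=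
          mul_le_mul_of_nonneg_left hIH (by linarith)
      _ = 2 * (1 - γ) ^ (k + 1) := by ring

end Aux

theorem statement4 (N : ℕ) (S : Finset (Matrix (Fin N) (Fin N) ℝ))
    (hne : S.Nonempty)
    (hcs : ∀ A ∈ S, ColStoch A)
    (hSIA : ∀ L : List (Matrix (Fin N) (Fin N) ℝ),
      (∀ A ∈ L, A ∈ S) → L ≠ [] → IsSIA L.prod) :
    ∀ ε : ℝ, 0 < ε → ∃ ν : ℕ, ∀ L : List (Matrix (Fin N) (Fin N) ℝ),
      (∀ A ∈ L, A ∈ S) → ν ≤ L.length →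
      ∀ j i₁ i₂ : Fin N, |L.prod j i₁ - L.prod j i₂| < ε := by

  intro ε hε
  rcases Nat.eq_zero_or_pos N with hN | hN
  · exact ⟨0, fun L _ _ j => absurd j.isLt (by omega)⟩
  · have hpos : ∀ L : List (Matrix (Fin N) (Fin N) ℝ), (∀ A ∈ L, A ∈ S) → L ≠ [] →
        ∃ m, PosRow (L.prod ^ m) := by
      intro L hL hLne
      obtain ⟨hcsp, c, _, htend⟩ := hSIA L hL hLne
      exact sia_pow_posRow hN (cs_pow hcsp) htend
    set n₀ : ℕ := Fintype.card (Matrix (Fin N) (Fin N) Bool) + 1 with hn₀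
    have hword := word_posRow hN S hcs hpos
    obtain ⟨γ, hγpos, hγ1, hblock⟩ :=
      exists_gamma hN S hne hcs n₀ (by omega) hword
    obtain ⟨k, hk⟩ := exists_pow_lt_of_lt_one (half_pos hε) (show 1 - γ < 1 by linarith)
    refine ⟨n₀ * k, ?_⟩
    intro L hL hlen j i₁ i₂
    have hsum := key_bound S hcs hγ1 hblock k L hL hlen i₁ i₂
    have h1 : |L.prod j i₁ - L.prod j i₂| ≤ ∑ j', |L.prod j' i₁ - L.prod j' i₂| :=
      Finset.single_le_sum (f := fun j' => |L.prod j' i₁ - L.prod j' i₂|)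
        (fun j' _ => abs_nonneg _) (Finset.mem_univ j)
    calc |L.prod j i₁ - L.prod j i₂| ≤ 2 * (1 - γ) ^ k := le_trans h1 hsum
      _ < 2 * (ε / 2) := by linarith
      _ = ε := by ring
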